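/- Let N ∈ ℕ with N ≥ 4. The polynomials φ̃_0, φ̃_1, …, φ̃_{N−4}, where φ̃_k(x) = T_k(x) − (2(k+2)/(k+3)) T_{k+2}(x) + ((k+1)/(k+3)) T_{k+4}(x), form a basis of the real vector space { p ∈ ℝ[X] : deg p ≤ N, p(1) = p(−1) = 0 and p'(1) = p'(−1) = 0 }; in particular they are linearly independent and this space has dimension N − 3. -/
import Mathlib


open Real Polynomial

/-- The k-th Chebyshev polynomial of the first kind, as a real polynomial. -/
noncomputable def chebT (n : ℕ) : Polynomial ℝ := Polynomial.Chebyshev.T ℝ (n : ℤ)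

/-- Shen's biharmonic basis function
`φ̃_k = T_k − (2(k+2)/(k+3)) T_{k+2} + ((k+1)/(k+3)) T_{k+4}`. -/
noncomputable def shenB (k : ℕ) : Polynomial ℝ :=
  chebT k - Polynomial.C ((2 * ((k : ℝ) + 2)) / ((k : ℝ) + 3)) * chebT (k + 2)
    + Polynomial.C (((k : ℝ) + 1) / ((k : ℝ) + 3)) * chebT (k + 4)

/-- The space `{ p ∈ ℝ[X] : deg p ≤ N, p(±1) = 0, p'(±1) = 0 }` of polynomials
of degree at most `N` satisfying the clamped (biharmonic) boundary conditions. -/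
noncomputable def clampedSpace (N : ℕ) : Submodule ℝ (Polynomial ℝ) where
  carrier := {p | p.degree ≤ (N : ℕ) ∧ p.eval (1 : ℝ) = 0 ∧ p.eval (-1 : ℝ) = 0 ∧
    (Polynomial.derivative p).eval (1 : ℝ) = 0 ∧
    (Polynomial.derivative p).eval (-1 : ℝ) = 0}
  add_mem' := by
    rintro p q ⟨hp, hp1, hp2, hp3, hp4⟩ ⟨hq, hq1, hq2, hq3, hq4⟩
    exact ⟨le_trans (Polynomial.degree_add_le p q) (max_le hp hq),
      by simp [hp1, hq1], by simp [hp2, hq2], by simp [hp3, hq3], by simp [hp4, hq4]⟩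
  zero_mem' := ⟨by simp, by simp, by simp, by simp, by simp⟩
  smul_mem' := by
    rintro c p ⟨hp, hp1, hp2, hp3, hp4⟩
    exact ⟨le_trans (Polynomial.degree_smul_le c p) hp,
      by simp [hp1], by simp [hp2], by simp [hp3], by simp [hp4]⟩


section ShenAux

lemma two_step {P : ℕ → Prop} (h0 : P 0) (h1 : P 1)
    (hstep : ∀ n, P n → P (n + 1) → P (n + 2)) : ∀ n, P n := by
  intro n
  induction n using Nat.strong_induction_on with
  | _ n ih =>
    match n with
    | 0 => exact h0
    | 1 => exact h1
    | (m + 2) => exact hstep m (ih m (by omega)) (ih (m + 1) (by omega))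

lemma chebT_zero' : chebT 0 = 1 := by simp [chebT, Polynomial.Chebyshev.T_zero]

lemma chebT_one' : chebT 1 = X := by simp [chebT, Polynomial.Chebyshev.T_one]

lemma chebT_add_two (n : ℕ) : chebT (n + 2) = 2 * X * chebT (n + 1) - chebT n := by
  have := Polynomial.Chebyshev.T_add_two ℝ (n : ℤ)
  simp only [chebT]
  push_cast
  exact this

lemma chebT_eval (s : ℝ) (hs : s * s = 1) : ∀ n : ℕ, (chebT n).eval s = s ^ n := by
  apply two_step
  · simp [chebT_zero']
  · simp [chebT_one']
  · intro n h1 h2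
    rw [chebT_add_two]
    simp only [eval_sub, eval_mul, eval_ofNat, eval_X, h1, h2]
    rw [pow_succ s (n+1), pow_succ s n]
    linear_combination (s ^ n) * hs

lemma chebT_deriv_eval (s : ℝ) (hs : s * s = 1) :
    ∀ n : ℕ, (derivative (chebT n)).eval s = s ^ (n + 1) * (n : ℝ) ^ 2 := by
  apply two_step
  · simp [chebT_zero']
  · simp [chebT_one']
    rw [pow_two, hs]
  · intro n h1 h2
    rw [chebT_add_two]
    simp only [derivative_sub, derivative_mul, derivative_ofNat, derivative_X, eval_sub, eval_add,
      eval_mul, eval_ofNat, eval_X, h1, h2, chebT_eval s hs]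
    push_cast
    simp only [eval_zero, eval_one]
    linear_combination ((2 * ((n:ℝ) + 1) ^ 2 - ((n:ℝ) + 2) ^ 2) * s ^ (n + 1)) * hs

lemma chebT_degree_coeff : ∀ n : ℕ, (chebT n).degree = n ∧ 0 < (chebT n).coeff n := by
  apply two_step
  · simp [chebT_zero']
  · simp [chebT_one']
  · intro n ⟨hd1, hc1⟩ ⟨hd2, hc2⟩
    have hX : (2 * X * chebT (n + 1)).degree = ((n + 2 : ℕ) : WithBot ℕ) := by
      rw [degree_mul, degree_mul, hd2, degree_X]
      rw [show ((2 : Polynomial ℝ)) = C 2 from (map_ofNat C 2).symm, degree_C (by norm_num)]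
      push_cast
      ring
    have hlt : (chebT n).degree < (2 * X * chebT (n + 1)).degree := by
      rw [hX, hd1]
      exact_mod_cast Nat.lt_add_of_pos_right (by norm_num)
    constructor
    · rw [chebT_add_two, degree_sub_eq_left_of_degree_lt hlt, hX]
    · rw [chebT_add_two]
      have h0 : (chebT n).coeff (n + 2) = 0 :=
        coeff_eq_zero_of_degree_lt (by rw [hd1]; exact_mod_cast (by omega : n < n + 2))
      have : (2 * X * chebT (n + 1)).coeff (n + 2) = 2 * (chebT (n + 1)).coeff (n + 1) := by
        rw [show (2 : Polynomial ℝ) * X * chebT (n+1)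
            = C 2 * (X * chebT (n+1)) from by rw [show ((2 : Polynomial ℝ)) = C 2 from (map_ofNat C 2).symm]; ring,
          coeff_C_mul, show n + 2 = (n + 1) + 1 from rfl, coeff_X_mul]
      rw [coeff_sub, this, h0, sub_zero]
      positivity

lemma shenB_degree (k : ℕ) : (shenB k).degree = ((k + 4 : ℕ) : WithBot ℕ) := by
  have hb : (((k : ℝ) + 1) / ((k : ℝ) + 3)) ≠ 0 := by positivity
  have h4 : (C (((k : ℝ) + 1) / ((k : ℝ) + 3)) * chebT (k + 4)).degree = ((k + 4 : ℕ) : WithBot ℕ) := by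
    rw [degree_mul, degree_C hb, (chebT_degree_coeff (k + 4)).1, zero_add]
  have hlow : (chebT k - C ((2 * ((k : ℝ) + 2)) / ((k : ℝ) + 3)) * chebT (k + 2)).degree
      < ((k + 4 : ℕ) : WithBot ℕ) := by
    apply lt_of_le_of_lt (degree_sub_le _ _)
    apply max_lt
    · rw [(chebT_degree_coeff k).1]; exact_mod_cast (by omega : k < k + 4)
    · apply lt_of_le_of_lt (degree_mul_le _ _)
      apply lt_of_le_of_lt (add_le_add degree_C_le ((chebT_degree_coeff (k+2)).1.le))
      rw [zero_add]; exact_mod_cast (by omega : k + 2 < k + 4)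
  rw [shenB, degree_add_eq_right_of_degree_lt (by rw [h4]; exact hlow), h4]

lemma shenB_ne_zero (k : ℕ) : shenB k ≠ 0 := by
  intro h
  have := shenB_degree k
  rw [h, degree_zero] at this
  exact absurd this.symm (by exact_mod_cast WithBot.coe_ne_bot)

lemma linearIndependent_of_degree_strictMono {n : ℕ} (v : Fin n → Polynomial ℝ)
    (h0 : ∀ i, v i ≠ 0) (hmono : StrictMono fun i => (v i).degree) :
    LinearIndependent ℝ v := by
  rw [linearIndependent_iff']
  intro s g
  induction s using Finset.strongInduction with
  | _ s ih =>
    intro hsum i hi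
    have hne : s.Nonempty := ⟨i, hi⟩
    set m := s.max' hne with hm
    by_cases hgm : g m = 0
    · have hsum' : ∑ j ∈ s.erase m, g j • v j = 0 := by
        rw [← Finset.add_sum_erase _ _ (s.max'_mem hne)] at hsum
        rwa [hgm, zero_smul, zero_add] at hsum
      rcases eq_or_ne i m with rfl | him
      · exact hgm
      · exact ih (s.erase m) (Finset.erase_ssubset (s.max'_mem hne)) hsum' i
          (Finset.mem_erase.mpr ⟨him, hi⟩)
    · exfalso
      have hc := congrArg (fun p => p.coeff (v m).natDegree) hsum
      simp only [finset_sum_coeff, coeff_smul, coeff_zero] at hc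
      rw [Finset.sum_eq_single m (fun j hj hjm => by
        have hlt : (v j).degree < (v m).degree :=
          hmono (lt_of_le_of_ne (s.le_max' j hj) hjm)
        rw [degree_eq_natDegree (h0 m)] at hlt
        rw [coeff_eq_zero_of_degree_lt hlt, smul_zero])
        (fun h => absurd (s.max'_mem hne) h)] at hc
      rw [smul_eq_mul, ← leadingCoeff] at hc
      exact hgm ((mul_eq_zero.mp hc).resolve_right (leadingCoeff_ne_zero.mpr (h0 m)))

lemma shenB_eval_one (k : ℕ) : (shenB k).eval 1 = 0 := by
  have h3 : (k : ℝ) + 3 ≠ 0 := by positivity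
  simp only [shenB, eval_add, eval_sub, eval_mul, eval_C, chebT_eval 1 (by norm_num), one_pow]
  field_simp
  ring

lemma shenB_eval_neg_one (k : ℕ) : (shenB k).eval (-1) = 0 := by
  have h3 : (k : ℝ) + 3 ≠ 0 := by positivity
  have hA : 1 - (2 * ((k : ℝ) + 2)) / ((k : ℝ) + 3) + ((k : ℝ) + 1) / ((k : ℝ) + 3) = 0 := by
    field_simp; ring
  simp only [shenB, eval_add, eval_sub, eval_mul, eval_C,
    chebT_eval (-1) (by norm_num), pow_add]
  norm_num
  linear_combination ((-1 : ℝ) ^ k) * hA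

lemma shenB_deriv_eval_one (k : ℕ) : (derivative (shenB k)).eval 1 = 0 := by
  have h3 : (k : ℝ) + 3 ≠ 0 := by positivity
  simp only [shenB, derivative_add, derivative_sub, derivative_C_mul, eval_add, eval_sub,
    eval_mul, eval_C, chebT_deriv_eval 1 (by norm_num), one_pow]
  push_cast
  field_simp
  ring

lemma shenB_deriv_eval_neg_one (k : ℕ) : (derivative (shenB k)).eval (-1) = 0 := by
  have h3 : (k : ℝ) + 3 ≠ 0 := by positivity
  have hB : ((k : ℝ)) ^ 2 - (2 * ((k : ℝ) + 2)) / ((k : ℝ) + 3) * ((k : ℝ) + 2) ^ 2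
      + ((k : ℝ) + 1) / ((k : ℝ) + 3) * ((k : ℝ) + 4) ^ 2 = 0 := by
    field_simp; ring
  simp only [shenB, derivative_add, derivative_sub, derivative_C_mul, eval_add, eval_sub,
    eval_mul, eval_C, chebT_deriv_eval (-1) (by norm_num)]
  push_cast
  simp only [pow_add]
  norm_num
  linear_combination ((-1 : ℝ) ^ (k + 1)) * hB

noncomputable def qpol : Polynomial ℝ := (X - C 1) ^ 2 * (X - C (-1)) ^ 2

lemma qpol_degree : qpol.degree = 4 := by
  rw [qpol, degree_mul, degree_pow, degree_pow, degree_X_sub_C, degree_X_sub_C]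
  rfl

lemma qpol_ne_zero : qpol ≠ 0 := fun h => by simpa [h] using qpol_degree

lemma qpol_eval_one : qpol.eval 1 = 0 := by simp [qpol]
lemma qpol_eval_neg_one : qpol.eval (-1) = 0 := by simp [qpol]
lemma qpol_deriv_eval_one : (derivative qpol).eval 1 = 0 := by
  simp [qpol, derivative_mul, derivative_pow]
lemma qpol_deriv_eval_neg_one : (derivative qpol).eval (-1) = 0 := by
  simp [qpol, derivative_mul, derivative_pow]

lemma sq_dvd_of_root_of_deriv_root {p : Polynomial ℝ} {a : ℝ} (h1 : p.eval a = 0)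
    (h2 : (derivative p).eval a = 0) : (X - C a) ^ 2 ∣ p := by
  obtain ⟨p₁, e⟩ := (dvd_iff_isRoot (a := a)).mpr h1
  have hd : derivative p = p₁ + (X - C a) * derivative p₁ := by
    rw [e, derivative_mul]; simp [derivative_sub]
  have h1' : p₁.eval a = 0 := by
    have := congrArg (eval a) hd
    simpa [h2] using this.symm
  obtain ⟨p₂, e₂⟩ := (dvd_iff_isRoot (a := a)).mpr h1'
  exact ⟨p₂, by rw [e, e₂]; ring⟩

lemma clamped_eq_map (N : ℕ) (hN : 4 ≤ N) :
    clampedSpace N = Submodule.map (LinearMap.mulLeft ℝ qpol) (degreeLT ℝ (N - 3)) := by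
  ext p
  constructor
  · rintro ⟨hdeg, h1, h2, h3, h4⟩
    rcases eq_or_ne p 0 with rfl | hp0
    · exact ⟨0, by simp [mem_degreeLT], by simp⟩
    have d1 : (X - C (1 : ℝ)) ^ 2 ∣ p := sq_dvd_of_root_of_deriv_root h1 h3
    have d2 : (X - C (-1 : ℝ)) ^ 2 ∣ p := sq_dvd_of_root_of_deriv_root h2 h4
    have hcop : IsCoprime ((X - C (1 : ℝ)) ^ 2) ((X - C (-1 : ℝ)) ^ 2) :=
      (isCoprime_X_sub_C_of_isUnit_sub (by norm_num)).pow
    obtain ⟨r, hr⟩ := hcop.mul_dvd d1 d2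
    have hr0 : r ≠ 0 := fun h => hp0 (by rw [hr, h, mul_zero])
    have hq4 : qpol.natDegree = 4 := natDegree_eq_of_degree_eq_some qpol_degree
    refine ⟨r, ?_, ?_⟩
    · rw [SetLike.mem_coe, mem_degreeLT]
      have hnd : p.natDegree = 4 + r.natDegree := by
        rw [hr, ← qpol, natDegree_mul qpol_ne_zero hr0, hq4]
      have hN' : p.natDegree ≤ N := natDegree_le_iff_degree_le.mpr hdeg
      have : r.natDegree < N - 3 := by omega
      exact lt_of_le_of_lt degree_le_natDegree (by exact_mod_cast this)
    · show qpol * r = p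
      rw [hr, qpol]
  · rintro ⟨r, hr, rfl⟩
    rw [SetLike.mem_coe, mem_degreeLT] at hr
    refine ⟨?_, ?_, ?_, ?_, ?_⟩
    · show (qpol * r).degree ≤ (N : ℕ)
      rcases eq_or_ne r 0 with rfl | hr0
      · simp
      have hq4 : qpol.natDegree = 4 := natDegree_eq_of_degree_eq_some qpol_degree
      have h1 : r.natDegree < N - 3 := by
        have := hr
        rw [degree_eq_natDegree hr0] at this
        exact_mod_cast this
      have h2 : (qpol * r).natDegree ≤ N := by
        rw [natDegree_mul qpol_ne_zero hr0, hq4]; omega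
      exact degree_le_natDegree.trans (by exact_mod_cast h2)
    · show (qpol * r).eval 1 = 0
      simp [qpol_eval_one]
    · show (qpol * r).eval (-1) = 0
      simp [qpol_eval_neg_one]
    · show (derivative (qpol * r)).eval 1 = 0
      rw [derivative_mul]
      simp [qpol_deriv_eval_one, qpol_eval_one]
    · show (derivative (qpol * r)).eval (-1) = 0
      rw [derivative_mul]
      simp [qpol_deriv_eval_neg_one, qpol_eval_neg_one]

end ShenAux

/-- For `N ≥ 4`, the polynomials `φ̃_0, …, φ̃_{N−4}` form a basis of the space of
polynomials of degree at most `N` satisfying `p(±1) = p'(±1) = 0`; in particular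
they are linearly independent and the space has dimension `N − 3`. -/
theorem shenB_is_basis (N : ℕ) (hN : 4 ≤ N) :
    (∀ k : ℕ, k ≤ N - 4 → shenB k ∈ clampedSpace N) ∧
    LinearIndependent ℝ (fun k : Fin (N - 3) => shenB (k : ℕ)) ∧
    Submodule.span ℝ (Set.range (fun k : Fin (N - 3) => shenB (k : ℕ))) = clampedSpace N ∧
    Module.finrank ℝ (clampedSpace N) = N - 3 := by
  have hmem : ∀ k : ℕ, k ≤ N - 4 → shenB k ∈ clampedSpace N := by
    intro k hk
    refine ⟨?_, shenB_eval_one k, shenB_eval_neg_one k, shenB_deriv_eval_one k,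
      shenB_deriv_eval_neg_one k⟩
    rw [shenB_degree k]
    exact_mod_cast (by omega : k + 4 ≤ N)
  have hLI : LinearIndependent ℝ (fun k : Fin (N - 3) => shenB (k : ℕ)) := by
    apply linearIndependent_of_degree_strictMono
    · exact fun i => shenB_ne_zero _
    · intro i j hij
      simp only [shenB_degree]
      exact_mod_cast (by omega : (i : ℕ) + 4 < (j : ℕ) + 4)
  have hdlt : FiniteDimensional ℝ (degreeLT ℝ (N - 3)) :=
    (Polynomial.degreeLTEquiv ℝ (N - 3)).symm.finiteDimensional
  have hfrd : Module.finrank ℝ (degreeLT ℝ (N - 3)) = N - 3 := by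
    rw [(Polynomial.degreeLTEquiv ℝ (N - 3)).finrank_eq]
    simp [Module.finrank_pi]
  have hinj : Function.Injective (LinearMap.mulLeft ℝ qpol) := fun a b h =>
    mul_left_cancel₀ qpol_ne_zero h
  have emap := Submodule.equivMapOfInjective (LinearMap.mulLeft ℝ qpol) hinj
    (degreeLT ℝ (N - 3))
  have hfd : FiniteDimensional ℝ (clampedSpace N) := by
    rw [clamped_eq_map N hN]
    exact emap.finiteDimensional
  have hfr : Module.finrank ℝ (clampedSpace N) = N - 3 := by
    rw [clamped_eq_map N hN, ← emap.finrank_eq, hfrd]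
  have hle : Submodule.span ℝ (Set.range (fun k : Fin (N - 3) => shenB (k : ℕ)))
      ≤ clampedSpace N := by
    rw [Submodule.span_le]
    rintro _ ⟨k, rfl⟩
    exact hmem k (by omega)
  have hspan : Submodule.span ℝ (Set.range (fun k : Fin (N - 3) => shenB (k : ℕ)))
      = clampedSpace N := by
    apply Submodule.eq_of_le_of_finrank_le hle
    rw [hfr, finrank_span_eq_card hLI]
    simp
  exact ⟨hmem, hLI, hspan, hfr⟩
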